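/- Let n ≥ 2 be an integer and let a' > 0 be a real number. For every x ∈ ℝ, setting I_n(x) = ∫_{b_n}^{a' x + b_n} φ(t)/(1 − Φ(t)) dt and C_n(x) = (1/n) e^{−I_n(x)}, there exists a real number S_n(x) with 0 < S_n(x) < C_n(x)²/(2(1 − C_n(x))) such that Φⁿ(a' x + b_n) − Λ(x) = e^{−n S_n(x)} (Λ(I_n(x)) − Λ(x)) + Λ(x)(e^{−n S_n(x)} − 1). -/

import Mathlib

open Real

/-- The standard normal distribution function. -/
noncomputable def stdNormalCDF (x : ℝ) : ℝ :=
  (Real.sqrt (2 * Real.pi))⁻¹ * ∫ t in Set.Iic x, Real.exp (-t ^ 2 / 2)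

/-- The standard normal density. -/
noncomputable def stdNormalPDF (x : ℝ) : ℝ :=
  (Real.sqrt (2 * Real.pi))⁻¹ * Real.exp (-x ^ 2 / 2)

/-- The Gumbel distribution function. -/
noncomputable def gumbelCDF (x : ℝ) : ℝ := Real.exp (-Real.exp (-x))

open MeasureTheory Set

lemma gauss_eq : (fun t : ℝ => Real.exp (-t ^ 2 / 2)) = fun t => Real.exp (-(1/2 : ℝ) * t ^ 2) := by
  funext t; ring_nf

lemma gauss_integrable : Integrable (fun t : ℝ => Real.exp (-t ^ 2 / 2)) := by
  rw [gauss_eq]; exact integrable_exp_neg_mul_sq (by norm_num)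

lemma gauss_integral : (∫ t : ℝ, Real.exp (-t ^ 2 / 2)) = Real.sqrt (2 * Real.pi) := by
  rw [gauss_eq, integral_gaussian]
  norm_num [mul_comm]

lemma cdf_hasDerivAt (x : ℝ) : HasDerivAt stdNormalCDF (stdNormalPDF x) x := by
  have h1 : HasDerivAt (fun u : ℝ => ∫ t in (0:ℝ)..u, Real.exp (-t ^ 2 / 2))
      (Real.exp (-x ^ 2 / 2)) x := by
    apply intervalIntegral.integral_hasDerivAt_right
      gauss_integrable.intervalIntegrable
    · exact (Continuous.stronglyMeasurable (by continuity)).stronglyMeasurableAtFilter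
    · exact (Continuous.continuousAt (by continuity))
  have h2 : ∀ u : ℝ, stdNormalCDF u = (Real.sqrt (2 * Real.pi))⁻¹ *
      ((∫ t in Set.Iic (0:ℝ), Real.exp (-t ^ 2 / 2)) + ∫ t in (0:ℝ)..u, Real.exp (-t ^ 2 / 2)) := by
    intro u
    rw [stdNormalCDF]
    congr 1
    rw [← intervalIntegral.integral_Iic_sub_Iic gauss_integrable.integrableOn
      gauss_integrable.integrableOn]
    ring
  have := ((h1.const_add (∫ t in Set.Iic (0:ℝ), Real.exp (-t ^ 2 / 2))).const_mul
      ((Real.sqrt (2 * Real.pi))⁻¹))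
  exact this.congr_of_eventuallyEq (Filter.Eventually.of_forall h2)
  

lemma cdf_continuous : Continuous stdNormalCDF :=
  continuous_iff_continuousAt.2 fun x => (cdf_hasDerivAt x).continuousAt

lemma sqrt_two_pi_pos : 0 < Real.sqrt (2 * Real.pi) :=
  Real.sqrt_pos.2 (by positivity)

lemma cdf_pos (x : ℝ) : 0 < stdNormalCDF x := by
  rw [stdNormalCDF]
  apply mul_pos (inv_pos.2 sqrt_two_pi_pos)
  rw [setIntegral_pos_iff_support_of_nonneg_ae]
  · have : Function.support (fun t : ℝ => Real.exp (-t ^ 2 / 2)) = Set.univ := by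
      ext t; simp [Real.exp_ne_zero]
    rw [this, Set.univ_inter]
    simp
  · filter_upwards with t using (Real.exp_pos _).le
  · exact gauss_integrable.integrableOn

lemma cdf_lt_one (x : ℝ) : stdNormalCDF x < 1 := by
  have hIoi : 0 < ∫ t in Set.Ioi x, Real.exp (-t ^ 2 / 2) := by
    rw [setIntegral_pos_iff_support_of_nonneg_ae]
    · have : Function.support (fun t : ℝ => Real.exp (-t ^ 2 / 2)) = Set.univ := by
        ext t; simp [Real.exp_ne_zero]
      rw [this, Set.univ_inter]
      simp
    · filter_upwards with t using (Real.exp_pos _).le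
    · exact gauss_integrable.integrableOn
  have key : (∫ t in Set.Iic x, Real.exp (-t ^ 2 / 2)) < Real.sqrt (2 * Real.pi) := by
    rw [← gauss_integral, ← intervalIntegral.integral_Iic_add_Ioi
      gauss_integrable.integrableOn gauss_integrable.integrableOn]
    exact lt_add_of_pos_right _ hIoi
  rw [stdNormalCDF]
  calc (Real.sqrt (2 * Real.pi))⁻¹ * ∫ t in Set.Iic x, Real.exp (-t ^ 2 / 2)
      < (Real.sqrt (2 * Real.pi))⁻¹ * Real.sqrt (2 * Real.pi) :=
        by exact mul_lt_mul_of_pos_left key (inv_pos.2 sqrt_two_pi_pos)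
    _ = 1 := inv_mul_cancel₀ sqrt_two_pi_pos.ne'

lemma log_ftc (p q : ℝ) : (∫ t in p..q, stdNormalPDF t / (1 - stdNormalCDF t))
    = Real.log (1 - stdNormalCDF p) - Real.log (1 - stdNormalCDF q) := by
  have hd : ∀ t ∈ Set.uIcc p q, HasDerivAt (fun u => -Real.log (1 - stdNormalCDF u))
      (stdNormalPDF t / (1 - stdNormalCDF t)) t := by
    intro t _
    have h1 : HasDerivAt (fun u => 1 - stdNormalCDF u) (-stdNormalPDF t) t :=
      (cdf_hasDerivAt t).const_sub 1
    have hne : 1 - stdNormalCDF t ≠ 0 := by have := cdf_lt_one t; intro h; linarith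
    have h2 := (h1.log hne).neg
    exact h2.congr_deriv (by ring)
  have hcont : Continuous (fun t => stdNormalPDF t / (1 - stdNormalCDF t)) := by
    apply Continuous.div
    · unfold stdNormalPDF; continuity
    · exact continuous_const.sub cdf_continuous
    · intro t; have := cdf_lt_one t; intro h; linarith
  rw [intervalIntegral.integral_eq_sub_of_hasDerivAt hd (hcont.intervalIntegrable _ _)]
  ring

/-- Decomposition of `Φⁿ(a' x + bₙ) − Λ(x)`: with
`Iₙ(x) = ∫_{bₙ}^{a' x + bₙ} φ(t)/(1 − Φ(t)) dt` and `Cₙ(x) = (1/n) e^{−Iₙ(x)}`,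
there is `Sₙ(x)` with `0 < Sₙ(x) < Cₙ(x)²/(2(1 − Cₙ(x)))` such that
`Φⁿ(a' x + bₙ) − Λ(x) = e^{−n Sₙ(x)}(Λ(Iₙ(x)) − Λ(x)) + Λ(x)(e^{−n Sₙ(x)} − 1)`. -/
theorem difference_decomposition (n : ℕ) (hn : 2 ≤ n) (a' : ℝ) (ha' : 0 < a')
    (b : ℝ) (hb : stdNormalCDF b = 1 - 1 / (n : ℝ)) (x : ℝ)
    (I : ℝ) (hI : I = ∫ t in b..(a' * x + b), stdNormalPDF t / (1 - stdNormalCDF t))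
    (Cn : ℝ) (hCn : Cn = (1 / (n : ℝ)) * Real.exp (-I)) :
    ∃ S : ℝ, 0 < S ∧ S < Cn ^ 2 / (2 * (1 - Cn)) ∧
      stdNormalCDF (a' * x + b) ^ n - gumbelCDF x =
        Real.exp (-(n * S)) * (gumbelCDF I - gumbelCDF x)
          + gumbelCDF x * (Real.exp (-(n * S)) - 1) := by
  have hn0 : (0:ℝ) < n := by positivity
  set y := a' * x + b with hy
  have hy1 : (0:ℝ) < 1 - stdNormalCDF y := by have := cdf_lt_one y; linarith
  have hb1 : (0:ℝ) < 1 - stdNormalCDF b := by have := cdf_lt_one b; linarith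
  have hfb : 1 - stdNormalCDF b = 1/(n:ℝ) := by rw [hb]; ring
  have hFy : 1 - stdNormalCDF y = Cn := by
    have hIeq : I = Real.log (1 - stdNormalCDF b) - Real.log (1 - stdNormalCDF y) :=
      hI.trans (log_ftc b y)
    have hlog : Real.log (1 - stdNormalCDF y) = Real.log (1 - stdNormalCDF b) + (-I) := by
      linarith [hIeq]
    calc 1 - stdNormalCDF y = Real.exp (Real.log (1 - stdNormalCDF y)) :=
          (Real.exp_log hy1).symm
      _ = Real.exp (Real.log (1 - stdNormalCDF b)) * Real.exp (-I) := by
          rw [hlog, Real.exp_add]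
      _ = Cn := by rw [Real.exp_log hb1, hfb, hCn]
  have hCnpos : 0 < Cn := by rw [← hFy]; exact hy1
  have hCnlt : Cn < 1 := by have := cdf_pos y; linarith [hFy]
  have h1Cn : (0:ℝ) < 1 - Cn := by linarith
  set S := -Real.log (1 - Cn) - Cn with hS
  have hSpos : 0 < S := by
    have hlt : Real.log (1 - Cn) < (1 - Cn) - 1 :=
      Real.log_lt_sub_one_of_pos h1Cn (by linarith)
    simp only [hS]; linarith
  -- sum bound
  have habs : |Cn| < 1 := abs_lt.2 ⟨by linarith, hCnlt⟩
  have hs1 : HasSum (fun k : ℕ => Cn ^ (k+1) / (k+1)) (-Real.log (1 - Cn)) :=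
    Real.hasSum_pow_div_log_of_abs_lt_one habs
  have hs2 : HasSum (fun k : ℕ => Cn ^ (k+2) / ((k:ℝ)+2)) S := by
    have hval : -Real.log (1 - Cn) = S + ∑ i ∈ Finset.range 1, Cn ^ (i+1) / ((i:ℝ)+1) := by
      simp only [hS]; norm_num
    rw [hval] at hs1
    have h2 := (hasSum_nat_add_iff (f := fun k : ℕ => Cn ^ (k+1) / ((k:ℝ)+1)) 1).2 hs1
    have hf : (fun k : ℕ => Cn ^ (k+2) / ((k:ℝ)+2)) = fun k : ℕ => Cn ^ (k + 1 + 1) / (((k + 1 : ℕ) : ℝ) + 1) := by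
      funext k; push_cast; ring
    rw [hf]; exact h2
  have hs3 : HasSum (fun k : ℕ => Cn ^ (k+2) / 2) (Cn^2/(2*(1-Cn))) := by
    have h := (hasSum_geometric_of_lt_one hCnpos.le hCnlt).mul_left (Cn^2/2)
    have hfun : (fun k : ℕ => Cn ^ (k+2) / 2) = fun k => Cn^2/2 * Cn^k := by
      funext k; ring
    have hval : Cn^2/(2*(1-Cn)) = Cn^2/2 * (1-Cn)⁻¹ := by
      field_simp
    rw [hfun, hval]; exact h
  have hSlt : S < Cn ^ 2 / (2 * (1 - Cn)) := by
    rw [← hs2.tsum_eq, ← hs3.tsum_eq]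
    refine Summable.tsum_lt_tsum (i := 1) (fun k => ?_) ?_ hs2.summable hs3.summable
    · apply div_le_div_of_nonneg_left (by positivity) (by norm_num)
      have : (0:ℝ) ≤ (k:ℝ) := Nat.cast_nonneg k
      linarith
    · norm_num
      apply div_lt_div_of_pos_left (by positivity) (by norm_num) (by norm_num)
  refine ⟨S, hSpos, hSlt, ?_⟩
  have hnCn : (n:ℝ) * Cn = Real.exp (-I) := by rw [hCn]; field_simp
  have hkey : stdNormalCDF y ^ n = Real.exp (-((n:ℝ)*S)) * gumbelCDF I := by
    have h1 : stdNormalCDF y = 1 - Cn := by linarith [hFy]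
    rw [h1, ← Real.exp_log h1Cn, ← Real.exp_nat_mul, gumbelCDF, ← Real.exp_add]
    congr 1
    have hlg : Real.log (1 - Cn) = -S - Cn := by simp only [hS]; ring
    rw [hlg, ← hnCn]
    ring
  rw [hkey]
  ring
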